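/- Let m, n ≥ 1 be integers with m ≤ n, and let q = ⌊n/m⌋. Then there exist m+n vectors w₀, …, w_{m+n−1} ∈ S^{n−1} with the property that for every continuous map f : S^{n−1} → ℝ^{m+n−1} with f(−v) = −f(v) for all v, there exist signs e₀, …, e_{m+n−1} ∈ {+1, −1} such that 0 lies in the convex hull of the image f(X) of the set X = {eᵢ wᵢ : i = 0, …, m+n−1}, which has cardinality m+n and diameter at most π − arccos(1/q). -/

import Mathlib

open Metric RealInnerProductSpace

open Finset in
lemma simplexAux (d : ℕ) (hd : 1 ≤ d) :
    ∃ u : Fin (d + 1) → ℕ → ℝ,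
      (∀ p, ∑ j ∈ Finset.range d, u p j * u p j = 1) ∧
      (∀ p p', p ≠ p' → ∑ j ∈ Finset.range d, u p j * u p' j = -(1 / (d : ℝ))) := by
  have hD : (0:ℝ) < d := by exact_mod_cast Nat.pos_of_ne_zero (by omega)
  have hDne : (d:ℝ) ≠ 0 := ne_of_gt hD
  set sd : ℝ := Real.sqrt d with hsd_def
  have hsd : 0 < sd := Real.sqrt_pos.mpr hD
  have hsd2 : sd * sd = d := Real.mul_self_sqrt hD.le
  set a : ℝ := Real.sqrt ((d + 1) / d) with ha_def
  have ha2 : a * a = ((d:ℝ) + 1) / d := Real.mul_self_sqrt (by positivity)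
  set b : ℝ := (1 / sd - a) / d with hb_def
  set c : ℝ := -(1 / sd) with hc_def
  have hdb : (d:ℝ) * b = 1 / sd - a := by rw [hb_def]; field_simp
  have hfrac : (1 / (d:ℝ) - ((d:ℝ) + 1) / d) / d = -(1 / d) := by
    rw [div_sub_div_same, div_div]
    rw [show (1 - ((d:ℝ) + 1)) = -d by ring, neg_div]
    field_simp
  have key : (d:ℝ) * (b * b) + 2 * (a * b) = -(1 / d) := by
    have h1 : (d:ℝ) * (b * b) + 2 * (a * b) = ((d:ℝ) * b + 2 * a) * b := by ring
    have h2 : (d:ℝ) * b + 2 * a = 1 / sd + a := by linear_combination hdb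
    rw [h1, h2, hb_def]
    calc (1/sd + a) * ((1/sd - a)/(d:ℝ)) = ((1/sd + a) * (1/sd - a))/(d:ℝ) := by ring
    _ = (1/(sd*sd) - a*a)/(d:ℝ) := by rw [show (1/sd + a) * (1/sd - a) = 1/(sd*sd) - a*a by ring]
    _ = (1/(d:ℝ) - ((d:ℝ)+1)/d)/d := by rw [hsd2, ha2]
    _ = -(1/(d:ℝ)) := hfrac
  have key2 : c * ((d:ℝ) * b + a) = -(1 / d) := by
    have h1 : (d:ℝ) * b + a = 1 / sd := by rw [hdb]; ring
    rw [h1, hc_def, neg_mul, div_mul_div_comm, one_mul, hsd2]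
  have hcc : c * c = 1 / d := by
    rw [hc_def, neg_mul_neg, div_mul_div_comm, one_mul, hsd2]
  refine ⟨fun p j => if (p : ℕ) = d then c else if j = (p : ℕ) then a + b else b, ?_, ?_⟩
  · intro p
    by_cases hp : (p : ℕ) = d
    · simp only [if_pos hp]
      rw [Finset.sum_const, Finset.card_range, nsmul_eq_mul, hcc]
      field_simp
    · have hp' : (p : ℕ) < d := by have := p.isLt; omega
      simp only [if_neg hp]
      have hcong : ∀ j ∈ Finset.range d,
          (if j = (p:ℕ) then a + b else b) * (if j = (p:ℕ) then a + b else b)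
            = b * b + (if j = (p:ℕ) then 2 * (a * b) + a * a else 0) := by
        intro j _; split_ifs <;> ring
      rw [Finset.sum_congr rfl hcong, Finset.sum_add_distrib, Finset.sum_const,
        Finset.card_range, nsmul_eq_mul, Finset.sum_ite_eq' (Finset.range d) (p:ℕ),
        if_pos (Finset.mem_range.mpr hp')]
      have : (d:ℝ) * (b * b) + (2 * (a * b) + a * a) = -(1/d) + ((d:ℝ)+1)/d := by
        rw [← key, ← ha2]; ring
      rw [this]; field_simp; ring
  · intro p p' hpp'
    have hppn : (p:ℕ) ≠ (p':ℕ) := fun h => hpp' (Fin.ext h)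
    by_cases hp : (p : ℕ) = d <;> by_cases hp' : (p' : ℕ) = d
    · exact absurd (hp.trans hp'.symm) hppn
    · -- p = d, p' < d
      have hq' : (p' : ℕ) < d := by have := p'.isLt; omega
      simp only [if_pos hp, if_neg hp']
      have hcong : ∀ j ∈ Finset.range d,
          c * (if j = (p':ℕ) then a + b else b) = c * b + (if j = (p':ℕ) then c * a else 0) := by
        intro j _; split_ifs <;> ring
      rw [Finset.sum_congr rfl hcong, Finset.sum_add_distrib, Finset.sum_const,
        Finset.card_range, nsmul_eq_mul, Finset.sum_ite_eq' (Finset.range d) (p':ℕ),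
        if_pos (Finset.mem_range.mpr hq')]
      linear_combination key2
    · -- p < d, p' = d
      have hq' : (p : ℕ) < d := by have := p.isLt; omega
      simp only [if_pos hp', if_neg hp]
      have hcong : ∀ j ∈ Finset.range d,
          (if j = (p:ℕ) then a + b else b) * c = c * b + (if j = (p:ℕ) then c * a else 0) := by
        intro j _; split_ifs <;> ring
      rw [Finset.sum_congr rfl hcong, Finset.sum_add_distrib, Finset.sum_const,
        Finset.card_range, nsmul_eq_mul, Finset.sum_ite_eq' (Finset.range d) (p:ℕ),
        if_pos (Finset.mem_range.mpr hq')]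
      linear_combination key2
    · -- both < d
      simp only [if_neg hp, if_neg hp']
      have hcong : ∀ j ∈ Finset.range d,
          (if j = (p:ℕ) then a + b else b) * (if j = (p':ℕ) then a + b else b)
            = b * b + ((if j = (p:ℕ) then a * b else 0) + (if j = (p':ℕ) then a * b else 0)) := by
        intro j _
        split_ifs with h1 h2
        · exact absurd (h1.symm.trans h2) hppn
        · ring
        · ring
        · ring
      have hq1 : (p : ℕ) < d := by have := p.isLt; omega
      have hq2 : (p' : ℕ) < d := by have := p'.isLt; omega
      rw [Finset.sum_congr rfl hcong, Finset.sum_add_distrib, Finset.sum_add_distrib,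
        Finset.sum_const, Finset.card_range, nsmul_eq_mul,
        Finset.sum_ite_eq' (Finset.range d) (p:ℕ), Finset.sum_ite_eq' (Finset.range d) (p':ℕ),
        if_pos (Finset.mem_range.mpr hq1), if_pos (Finset.mem_range.mpr hq2)]
      linear_combination key

open Finset in
lemma blocksAux (m n : ℕ) (hm : 1 ≤ m) (hmn : m ≤ n) :
    ∃ w : Fin (m + n) → EuclideanSpace ℝ (Fin n),
      (∀ a, ‖w a‖ = 1) ∧
      (∀ a b, a ≠ b → |⟪w a, w b⟫| ≤ 1 / ((n / m : ℕ) : ℝ) ∧ ⟪w a, w b⟫ ≠ 1) ∧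
      (n / m = 1 → ∃ a b : Fin (m + n), a ≠ b ∧ w b = -w a) := by
  set q := n / m with hq_def
  set r := n % m with hr_def
  have hq1 : 1 ≤ q := (Nat.one_le_div_iff (by omega)).mpr hmn
  have hrm : r < m := Nat.mod_lt n (by omega)
  set s : Fin m → ℕ := fun k => q + if (k : ℕ) < r then 1 else 0 with hs_def
  have hs1 : ∀ k, 1 ≤ s k := fun k => le_trans hq1 (Nat.le_add_right _ _)
  have hsq : ∀ k, q ≤ s k := fun k => Nat.le_add_right _ _
  have hsum : ∑ k : Fin m, s k = n := by
    rw [hs_def]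
    rw [Fin.sum_univ_eq_sum_range (fun k => q + if k < r then 1 else 0) m]
    rw [Finset.sum_add_distrib, Finset.sum_const, Finset.card_range, smul_eq_mul]
    have h2 : ∑ k ∈ Finset.range m, (if k < r then 1 else 0) = r := by
      rw [← Finset.sum_subset (Finset.range_subset_range.mpr hrm.le)
        (fun x _ hx => by rw [if_neg (by simpa using hx)])]
      rw [Finset.sum_congr rfl (fun x hx => if_pos (Finset.mem_range.mp hx))]
      simp
    rw [h2, hq_def, hr_def]
    exact Nat.div_add_mod n m
  choose u hu1 hu2 using fun k : Fin m => simplexAux (s k) (hs1 k)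
  have cardι : Fintype.card ((k : Fin m) × Fin (s k)) = n := by
    simp [Fintype.card_sigma, hsum]
  have cardκ : Fintype.card ((k : Fin m) × Fin (s k + 1)) = m + n := by
    simp only [Fintype.card_sigma, Fintype.card_fin]
    rw [Finset.sum_add_distrib, hsum, Finset.sum_const, Finset.card_univ, Fintype.card_fin,
      smul_eq_mul, mul_one]
    omega
  obtain φ := Fintype.equivOfCardEq ((Fintype.card_fin n).trans cardι.symm)
  obtain ψ := Fintype.equivOfCardEq ((Fintype.card_fin (m + n)).trans cardκ.symm)
  set B : ((k : Fin m) × Fin (s k + 1)) → ((l : Fin m) × Fin (s l)) → ℝ :=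
    fun x z => if z.1 = x.1 then u x.1 x.2 (z.2 : ℕ) else 0 with hB_def
  set w : Fin (m + n) → EuclideanSpace ℝ (Fin n) := fun a => WithLp.toLp 2 (fun i => B (ψ a) (φ i)) with hw_def
  have hinner : ∀ a b, ⟪w a, w b⟫ = ∑ z : (k : Fin m) × Fin (s k), B (ψ a) z * B (ψ b) z := by
    intro a b
    rw [PiLp.inner_apply]
    simp only [RCLike.inner_apply, starRingEnd_apply, star_trivial]
    simp only [hw_def, WithLp.ofLp_toLp]
    rw [← Equiv.sum_comp φ (fun z => B (ψ a) z * B (ψ b) z)]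
    exact Finset.sum_congr rfl (fun i _ => mul_comm _ _)
  have hsame : ∀ (k : Fin m) (p p' : Fin (s k + 1)),
      ∑ z : (l : Fin m) × Fin (s l), B ⟨k, p⟩ z * B ⟨k, p'⟩ z
        = ∑ j ∈ Finset.range (s k), u k p j * u k p' j := by
    intro k p p'
    rw [← Finset.univ_sigma_univ, Finset.sum_sigma]
    rw [Finset.sum_eq_single k]
    · rw [← Fin.sum_univ_eq_sum_range (fun j => u k p j * u k p' j) (s k)]
      exact Finset.sum_congr rfl (fun j _ => by simp [hB_def])
    · intro l _ hl
      exact Finset.sum_eq_zero (fun j _ => by simp [hB_def, hl])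
    · intro h; exact absurd (Finset.mem_univ k) h
  have hdiffblock : ∀ (k k' : Fin m), k ≠ k' → ∀ (p : Fin (s k + 1)) (p' : Fin (s k' + 1)),
      ∑ z : (l : Fin m) × Fin (s l), B ⟨k, p⟩ z * B ⟨k', p'⟩ z = 0 := by
    intro k k' hkk' p p'
    rw [← Finset.univ_sigma_univ, Finset.sum_sigma]
    refine Finset.sum_eq_zero (fun l _ => Finset.sum_eq_zero (fun j _ => ?_))
    by_cases hl : l = k
    · have : l ≠ k' := fun h => hkk' (hl.symm.trans h)
      simp [hB_def, this]
    · simp [hB_def, hl]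
  have hnormsq : ∀ a, ⟪w a, w a⟫ = 1 := by
    intro a
    rw [hinner]
    obtain ⟨k, p⟩ := ψ a
    rw [hsame]
    exact hu1 k p
  have hnorm : ∀ a, ‖w a‖ = 1 := by
    intro a
    have h := hnormsq a
    rw [real_inner_self_eq_norm_mul_norm] at h
    nlinarith [norm_nonneg (w a)]
  have hinnercases : ∀ a b, a ≠ b →
      ⟪w a, w b⟫ = 0 ∨ ∃ k : Fin m, ⟪w a, w b⟫ = -(1 / (s k : ℝ)) := by
    intro a b hab
    have hne : ψ a ≠ ψ b := fun h => hab (ψ.injective h)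
    rw [hinner]
    revert hne
    obtain ⟨k, p⟩ := ψ a
    obtain ⟨k', p'⟩ := ψ b
    intro hne
    by_cases hk : k = k'
    · subst hk
      have hpp' : p ≠ p' := by
        intro h; exact hne (by rw [h])
      right
      exact ⟨k, by rw [hsame]; exact hu2 k p p' hpp'⟩
    · left; exact hdiffblock k k' hk p p'
  have hq0 : (0:ℝ) < (q : ℝ) := by exact_mod_cast hq1
  refine ⟨w, hnorm, ?_, ?_⟩
  · intro a b hab
    rcases hinnercases a b hab with h | ⟨k, h⟩
    · rw [h]
      constructor
      · simp [le_div_iff₀ hq0]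
      · norm_num
    · rw [h]
      have hsk0 : (0:ℝ) < (s k : ℝ) := by exact_mod_cast hs1 k
      constructor
      · rw [abs_neg, abs_of_nonneg (by positivity)]
        apply div_le_div_of_nonneg_left one_pos.le hq0
        · exact_mod_cast hsq k
      · nlinarith [div_pos one_pos hsk0]
  · intro hq1'
    have hrm1 : ¬ ((m - 1 : ℕ) < r) := by omega
    set k₀ : Fin m := ⟨m - 1, by omega⟩ with hk₀
    have hsk₀ : s k₀ = 1 := by simp [hs_def, hk₀, hrm1, hq1']
    have h01 : (0 : ℕ) < s k₀ + 1 := by omega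
    have h11 : (1 : ℕ) < s k₀ + 1 := by omega
    set p₀ : Fin (s k₀ + 1) := ⟨0, h01⟩
    set p₁ : Fin (s k₀ + 1) := ⟨1, h11⟩
    set a := ψ.symm ⟨k₀, p₀⟩ with ha_def
    set b := ψ.symm ⟨k₀, p₁⟩ with hb_def2
    have hab : a ≠ b := by
      intro h
      have := ψ.symm.injective (ha_def ▸ hb_def2 ▸ h)
      simp only [Sigma.mk.inj_iff, heq_eq_eq] at this
      exact absurd this.2 (by simp [p₀, p₁, Fin.ext_iff])
    have hip : ⟪w a, w b⟫ = -1 := by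
      rw [hinner, ha_def, hb_def2, Equiv.apply_symm_apply, Equiv.apply_symm_apply, hsame]
      have := hu2 k₀ p₀ p₁ (by simp [p₀, p₁, Fin.ext_iff])
      rw [this, hsk₀]
      norm_num
    refine ⟨a, b, hab, ?_⟩
    have hzero : ⟪w a + w b, w a + w b⟫ = 0 := by
      rw [real_inner_add_add_self, hnormsq a, hip, hnormsq b]
      norm_num
    exact eq_neg_of_add_eq_zero_right (inner_self_eq_zero.mp hzero)

lemma arccos_anti {x y : ℝ} (h : x ≤ y) : Real.arccos y ≤ Real.arccos x := by
  unfold Real.arccos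
  exact sub_le_sub_left (Real.monotone_arcsin h) _

/-- Corollary 3.6 of the paper. For `1 ≤ m ≤ n` and `q = ⌊n/m⌋`, there
are `m+n` unit vectors `w₀, …, w_{m+n-1}` in `ℝⁿ`, independent of `f`, such that for every
odd continuous map `f : S^{n-1} → ℝ^{m+n-1}` there are signs `eᵢ ∈ {±1}` for which `0`
lies in the convex hull of `f(X)`, where `X = {eᵢ wᵢ}` has cardinality `m+n` and geodesic
diameter at most `π - arccos (1/q)`. -/
theorem stmt14 (m n : ℕ) (hm : 1 ≤ m) (hmn : m ≤ n) :
    ∃ w : Fin (m + n) → EuclideanSpace ℝ (Fin n),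
      (∀ i, ‖w i‖ = 1) ∧
      ∀ f : EuclideanSpace ℝ (Fin n) → EuclideanSpace ℝ (Fin (m + n - 1)),
        ContinuousOn f (sphere 0 1) →
        (∀ v ∈ sphere (0 : EuclideanSpace ℝ (Fin n)) 1, f (-v) = -f v) →
        ∃ e : Fin (m + n) → ℝ,
          (∀ i, e i = 1 ∨ e i = -1) ∧
          (0 : EuclideanSpace ℝ (Fin (m + n - 1))) ∈
            convexHull ℝ (f '' Set.range (fun i : Fin (m + n) => e i • w i)) ∧
          (Set.range (fun i : Fin (m + n) => e i • w i)).ncard = m + n ∧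
          (∀ x ∈ Set.range (fun i : Fin (m + n) => e i • w i),
            ∀ y ∈ Set.range (fun i : Fin (m + n) => e i • w i),
              Real.arccos ⟪x, y⟫ ≤ Real.pi - Real.arccos (1 / (n / m : ℕ))) := by
  obtain ⟨w, hwnorm, hwinner, hwanti⟩ := blocksAux m n hm hmn
  have hq1 : 1 ≤ n / m := (Nat.one_le_div_iff (by omega)).mpr hmn
  have hq0 : (0:ℝ) < ((n / m : ℕ) : ℝ) := by exact_mod_cast hq1
  have hsph : ∀ a, w a ∈ sphere (0 : EuclideanSpace ℝ (Fin n)) 1 := by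
    intro a; rw [mem_sphere_zero_iff_norm]; exact hwnorm a
  have hwnormsq : ∀ a, ⟪w a, w a⟫ = 1 := by
    intro a
    rw [real_inner_self_eq_norm_mul_norm, hwnorm a, one_mul]
  refine ⟨w, hwnorm, ?_⟩
  intro f hf hodd
  by_cases hqq : n / m = 1
  · -- q = 1 : signs all +1, antipodal pair gives 0 in hull
    refine ⟨fun _ => 1, fun i => Or.inl rfl, ?_, ?_, ?_⟩
    · simp only [one_smul]
      obtain ⟨a, b, hab, hba⟩ := hwanti hqq
      have h1 : f (w a) ∈ convexHull ℝ (f '' Set.range w) :=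
        subset_convexHull ℝ _ ⟨w a, ⟨a, rfl⟩, rfl⟩
      have h2 : f (w b) ∈ convexHull ℝ (f '' Set.range w) :=
        subset_convexHull ℝ _ ⟨w b, ⟨b, rfl⟩, rfl⟩
      have hfb : f (w b) = -f (w a) := by rw [hba]; exact hodd (w a) (hsph a)
      have hseg : (0 : EuclideanSpace ℝ (Fin (m + n - 1))) ∈ segment ℝ (f (w a)) (f (w b)) := by
        rw [hfb]
        exact ⟨1/2, 1/2, by norm_num, by norm_num, by norm_num, by
          rw [smul_neg, add_neg_cancel]⟩
      exact (convex_convexHull ℝ _).segment_subset h1 h2 hseg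
    · simp only [one_smul]
      have hinj : Function.Injective w := by
        intro a b h
        by_contra hab
        have := (hwinner a b hab).2
        rw [h, hwnormsq b] at this
        exact this rfl
      rw [← Nat.card_coe_set_eq, Nat.card_range_of_injective hinj,
        Nat.card_eq_fintype_card, Fintype.card_fin]
    · intro x hx y hy
      rw [hqq]
      norm_num
      exact Real.arccos_le_pi _
  · -- q ≥ 2
    set y : Fin (m + n) → EuclideanSpace ℝ (Fin (m + n - 1)) := fun a => f (w a) with hy_def
    have hdep : ¬ LinearIndependent ℝ y := by
      intro h
      have h2 := h.fintype_card_le_finrank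
      rw [finrank_euclideanSpace_fin, Fintype.card_fin] at h2
      omega
    obtain ⟨c, hc0, i₀, hi₀⟩ := Fintype.not_linearIndependent_iff.mp hdep
    set e : Fin (m + n) → ℝ := fun a => if 0 ≤ c a then (1:ℝ) else -1 with he_def
    have he : ∀ i, e i = 1 ∨ e i = -1 := by
      intro i; rw [he_def]; dsimp only; split_ifs <;> simp
    have heabs : ∀ i, |e i| = 1 := by
      intro i; rcases he i with h | h <;> rw [h] <;> norm_num
    have hkey : ∀ a, f (e a • w a) = e a • y a := by
      intro a
      rcases (by rw [he_def]; dsimp only; split_ifs <;> simp :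
        e a = 1 ∨ e a = -1) with h | h
      · rw [h, one_smul, one_smul, hy_def]
      · rw [h, neg_one_smul, neg_one_smul, hy_def]
        exact hodd (w a) (hsph a)
    have hlt : (1 : ℝ) / ((n / m : ℕ) : ℝ) < 1 := by
      rw [div_lt_one hq0]
      exact_mod_cast by omega
    have hinnerle : ∀ a b, a ≠ b → |⟪e a • w a, e b • w b⟫| ≤ 1 / ((n / m : ℕ) : ℝ) := by
      intro a b hab
      rw [real_inner_smul_left, real_inner_smul_right, abs_mul, abs_mul,
        heabs a, heabs b, one_mul, one_mul]
      exact (hwinner a b hab).1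
    have hginj : Function.Injective (fun a => e a • w a) := by
      intro a b h
      by_contra hab
      have h1 : ⟪e a • w a, e b • w b⟫ = 1 := by
        dsimp only at h
        rw [h, real_inner_smul_left, real_inner_smul_right, hwnormsq b]
        rcases he b with hb | hb <;> rw [hb] <;> norm_num
      have h2 := hinnerle a b hab
      rw [h1] at h2
      rw [abs_one] at h2
      linarith
    refine ⟨e, he, ?_, ?_, ?_⟩
    · -- convex hull
      have hS : 0 < ∑ a : Fin (m + n), |c a| :=
        Finset.sum_pos' (fun i _ => abs_nonneg _) ⟨i₀, Finset.mem_univ _, abs_pos.mpr hi₀⟩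
      have hz : ∀ a ∈ (Finset.univ : Finset (Fin (m + n))),
          f (e a • w a) ∈ f '' Set.range (fun i => e i • w i) :=
        fun a _ => ⟨e a • w a, ⟨a, rfl⟩, rfl⟩
      have hcm := Finset.centerMass_mem_convexHull Finset.univ
        (fun i _ => abs_nonneg (c i)) hS hz
      have hzero : Finset.univ.centerMass (fun a => |c a|) (fun a => f (e a • w a)) = 0 := by
        rw [Finset.centerMass]
        have hterm : ∀ a ∈ (Finset.univ : Finset (Fin (m + n))),
            |c a| • f (e a • w a) = c a • y a := by
          intro a _
          rw [hkey a, smul_smul]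
          congr 1
          rcases le_or_gt 0 (c a) with h | h
          · rw [he_def]; dsimp only; rw [if_pos h, mul_one, abs_of_nonneg h]
          · rw [he_def]; dsimp only; rw [if_neg (not_le.mpr h), abs_of_neg h]; ring
        rw [Finset.sum_congr rfl hterm, hc0, smul_zero]
      rw [hzero] at hcm
      exact hcm
    · rw [← Nat.card_coe_set_eq, Nat.card_range_of_injective hginj,
        Nat.card_eq_fintype_card, Fintype.card_fin]
    · intro x hx y' hy'
      obtain ⟨a, rfl⟩ := hx
      obtain ⟨b, rfl⟩ := hy'
      dsimp only
      by_cases hxy : (fun i => e i • w i) a = (fun i => e i • w i) b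
      · have : ⟪e a • w a, e b • w b⟫ = 1 := by
          rw [show e a • w a = e b • w b from hxy]
          rw [real_inner_smul_left, real_inner_smul_right, hwnormsq b]
          rcases he b with hb | hb <;> rw [hb] <;> norm_num
        rw [this, Real.arccos_one]
        linarith [Real.arccos_le_pi (1 / ((n / m : ℕ) : ℝ))]
      · have hab : a ≠ b := fun h => hxy (by rw [h])
        have h1 := hinnerle a b hab
        have h2 : -(1 / ((n / m : ℕ) : ℝ)) ≤ ⟪e a • w a, e b • w b⟫ := (abs_le.mp h1).1
        calc Real.arccos ⟪e a • w a, e b • w b⟫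
            ≤ Real.arccos (-(1 / ((n / m : ℕ) : ℝ))) := arccos_anti h2
          _ = Real.pi - Real.arccos (1 / ((n / m : ℕ) : ℝ)) := Real.arccos_neg _
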